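/- Let 𝐑 = R[x][y_{i,j}] with the ∂-action (∂·y_{i,j}=y_{i,j+1}, product rule with α,β,γ ∈ {0,1,−1}, and ∂ acting on R[x] via σ and δ not increasing x-degree). Let P ∈ 𝐑 have y-multi-degree (D_1,…,D_n) ≠ (0,…,0), and suppose c bounds heights under σ, δ as usual. Then for k ∈ ℕ: (i) the maximal second index of variables y_{i,j} in ∂^k·P increases by at most k in each group; (ii) the y-multi-degree of ∂^k·P is at most (D_1,…,D_n) componentwise; (iii) deg_x(∂^k·P) ≤ deg_x(P); (iv) h(∂^k·P) ≤ k·h(4)·Σ_i D_i + c^{(k)}(deg_x(P), h(P)). -/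

import Mathlib

set_option maxHeartbeats 1600000


open Polynomial

/-- A height function on an integral domain `R`. -/
structure HeightFn (R : Type*) [CommRing R] where
  h : R → ℝ
  h_zero : h 0 = 0
  h_nonneg : ∀ a, 0 ≤ h a
  h_neg : ∀ a, h (-a) = h a
  h_mul : ∀ a b, h (a * b) ≤ h a + h b
  h_sum : ∀ (n : ℕ) (f : Fin n → R) (B : ℝ), 0 ≤ B → (∀ i, h (f i) ≤ B) →
    h (∑ i, f i) ≤ h ((n - 1 : ℕ) : R) + B

namespace HeightFn

variable {R : Type*} [CommRing R] (H : HeightFn R)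

/-- Height of a natural number, viewed inside `R`. -/
def hN (n : ℕ) : ℝ := H.h (n : R)

/-- Height of a polynomial: the maximum height of its coefficients. -/
def hp (p : R[X]) : ℝ := p.support.fold max 0 fun i => H.h (p.coeff i)

end HeightFn

namespace HeightFn

variable {R : Type*} [CommRing R] (H : HeightFn R)

lemma hN_nonneg (m : ℕ) : 0 ≤ H.hN m := H.h_nonneg _

lemma h_coeff_le {p : R[X]} {B : ℝ} (hB : 0 ≤ B) (h : H.hp p ≤ B) (u : ℕ) :
    H.h (p.coeff u) ≤ B := by
  by_cases hu : u ∈ p.support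
  · exact ((Finset.fold_max_le B).mp h).2 u hu
  · rw [Polynomial.notMem_support_iff.mp hu, H.h_zero]; exact hB

lemma hp_le {p : R[X]} {B : ℝ} (hB : 0 ≤ B) (hco : ∀ u, H.h (p.coeff u) ≤ B) :
    H.hp p ≤ B :=
  (Finset.fold_max_le B).mpr ⟨hB, fun u _ => hco u⟩

lemma hp_nonneg (p : R[X]) : 0 ≤ H.hp p :=
  (Finset.le_fold_max 0).mpr (Or.inl le_rfl)

lemma hp_zero : H.hp (0 : R[X]) = 0 := by
  simp [hp]

lemma hp_neg (p : R[X]) : H.hp (-p) = H.hp p := by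
  have key : ∀ q : R[X], H.hp (-q) ≤ H.hp q := fun q =>
    H.hp_le (H.hp_nonneg q) fun u => by
      rw [Polynomial.coeff_neg, H.h_neg]
      exact H.h_coeff_le (H.hp_nonneg q) le_rfl u
  refine le_antisymm (key p) ?_
  have h2 := key (-p); rwa [neg_neg] at h2

lemma hp_finsum {q : ℕ} (f : Fin q → R[X]) {B : ℝ} (hB : 0 ≤ B)
    (hf : ∀ i, H.hp (f i) ≤ B) : H.hp (∑ i, f i) ≤ H.hN (q - 1) + B := by
  refine H.hp_le (add_nonneg (H.hN_nonneg _) hB) fun u => ?_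
  rw [Polynomial.finset_sum_coeff]
  exact H.h_sum q (fun i => (f i).coeff u) B hB fun i => H.h_coeff_le hB (hf i) u

lemma list_sum_eq_fin {M : Type*} [AddCommMonoid M] :
    ∀ (j : ℕ) (L : List M), L.length ≤ j → L.sum = ∑ i : Fin j, L.getD i 0 := by
  intro j
  induction j with
  | zero =>
    intro L hL
    have : L = [] := List.length_eq_zero_iff.mp (Nat.le_zero.mp hL)
    simp [this]
  | succ j ih =>
    intro L hL
    match L with
    | [] => simp
    | a :: L' =>
      rw [Fin.sum_univ_succ]
      simp only [List.getD_cons_zero, List.sum_cons]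
      congr 1
      rw [ih L' (by simpa using hL)]
      refine Finset.sum_congr rfl fun i _ => ?_
      simp [List.getD]
lemma hp_list_sum_le {L : List R[X]} {j : ℕ} (hlen : L.length ≤ j) {B : ℝ} (hB : 0 ≤ B)
    (hf : ∀ f ∈ L, H.hp f ≤ B) : H.hp L.sum ≤ H.hN (j - 1) + B := by
  rw [list_sum_eq_fin j L hlen]
  refine H.hp_finsum _ hB fun i => ?_
  by_cases hi : (i : ℕ) < L.length
  · refine hf _ ?_
    rw [List.getD_eq_getElem _ _ hi]
    exact List.getElem_mem _
  · rw [List.getD_eq_default _ _ (le_of_not_gt hi), H.hp_zero]; exact hB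

lemma hp_pow5 : ∀ (t : ℕ) (L : List R[X]) {B : ℝ}, L.length ≤ 5 ^ t → 0 ≤ B →
    (∀ f ∈ L, H.hp f ≤ B) → H.hp L.sum ≤ t * H.hN 4 + B := by
  intro t
  induction t with
  | zero =>
    intro L B hlen hB hf
    have h1 := H.hp_list_sum_le hlen hB hf
    simpa [hN, H.h_zero] using h1
  | succ t ih =>
    intro L B hlen hB hf
    set a := 5 ^ t with ha
    have hsplit : ∀ (L' : List R[X]) (cc : ℕ), L'.sum = (L'.take cc).sum + (L'.drop cc).sum := by
      intro L' cc; rw [← List.sum_append, List.take_append_drop]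
    have key : L.sum = ((L.take a).sum + ((L.drop a).take a).sum + ((L.drop (a+a)).take a).sum
        + ((L.drop (a+a+a)).take a).sum) + (L.drop (a+a+a+a)).sum := by
      rw [hsplit L a, hsplit (L.drop a) a, List.drop_drop, hsplit (L.drop (a+a)) a,
        List.drop_drop, hsplit (L.drop (a+a+a)) a, List.drop_drop]
      ring
    have hmem : ∀ (cc : ℕ) (f : R[X]), f ∈ (L.drop cc).take a → f ∈ L := by
      intro cc f hfm
      exact List.mem_of_mem_drop (List.mem_of_mem_take hfm)
    have hblock : ∀ cc : ℕ, H.hp ((L.drop cc).take a).sum ≤ t * H.hN 4 + B := by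
      intro cc
      exact ih _ (le_trans (List.length_take_le _ _) le_rfl) hB fun f hfm => hf f (hmem cc f hfm)
    have hlast : H.hp (L.drop (a+a+a+a)).sum ≤ t * H.hN 4 + B := by
      refine ih _ ?_ hB fun f hfm => hf f (List.mem_of_mem_drop hfm)
      have : (L.drop (a+a+a+a)).length = L.length - (a+a+a+a) := List.length_drop
      have h5 : (5:ℕ) ^ (t+1) = a+(a+a+a+a) := by rw [pow_succ]; ring
      omega
    have hfirst : H.hp (L.take a).sum ≤ t * H.hN 4 + B := by
      have : L.take a = (L.drop 0).take a := by simp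
      rw [this]; exact hblock 0
    -- now combine the 5 blocks with hp_finsum for Fin 5
    set g : Fin 5 → R[X] := ![(L.take a).sum, ((L.drop a).take a).sum, ((L.drop (a+a)).take a).sum,
      ((L.drop (a+a+a)).take a).sum, (L.drop (a+a+a+a)).sum] with hg
    have hsum5 : L.sum = ∑ i, g i := by
      rw [Fin.sum_univ_five, key]; simp [hg]
    have hB' : (0:ℝ) ≤ t * H.hN 4 + B :=
      add_nonneg (mul_nonneg (Nat.cast_nonneg t) (H.hN_nonneg 4)) hB
    have hgi : ∀ i, H.hp (g i) ≤ t * H.hN 4 + B := by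
      intro i
      fin_cases i <;> simp only [hg, Matrix.cons_val_zero, Matrix.cons_val_one, Matrix.head_cons,
        Matrix.cons_val_two, Matrix.tail_cons, Matrix.cons_val_three, Matrix.cons_val_four]
      · exact hfirst
      · exact hblock a
      · exact hblock (a+a)
      · exact hblock (a+a+a)
      · exact hlast
    rw [hsum5]
    have h5 := H.hp_finsum g hB' hgi
    have : H.hN (5-1) = H.hN 4 := by norm_num
    rw [this] at h5
    refine le_trans h5 ?_
    push_cast
    ring_nf
    linarith [le_refl (H.hN 4)]

end HeightFn

open Polynomial

namespace DFinite

variable {R : Type*} [CommRing R] {n : ℕ}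

/-- The ring `𝐑 = R[x][y_{i,j} : i = 1..n, j ≥ 0]`. -/
abbrev MvR (R : Type*) [CommRing R] (n : ℕ) := MvPolynomial (Fin n × ℕ) (Polynomial R)

/-- The `x`-degree of an element of `𝐑`. -/
noncomputable def degx (P : MvR R n) : ℕ := P.support.sup fun m => (MvPolynomial.coeff m P).natDegree

/-- The height (with respect to a height function on `R`) of an element of `𝐑`:
the maximum height of all elements of `R` appearing as coefficients. -/
noncomputable def mvHeight (H : HeightFn R) (P : MvR R n) : ℝ :=
  P.support.fold max 0 fun m => H.hp (MvPolynomial.coeff m P)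

/-- The total degree of a monomial in the `i`-th group `y_{i,0}, y_{i,1}, …` of
variables. -/
def gdeg (i : Fin n) (m : (Fin n × ℕ) →₀ ℕ) : ℕ := m.sum fun v e => if v.1 = i then e else 0

/-- `P` is homogeneous of multi-degree `Dv`, i.e. homogeneous of degree `Dv i` with
respect to each group `y_{i,0}, y_{i,1}, …` of variables. -/
def GHomog (P : MvR R n) (Dv : Fin n → ℕ) : Prop :=
  ∀ m ∈ P.support, ∀ i, gdeg i m = Dv i

end DFinite

namespace DFinite

variable {R : Type*} [CommRing R] {n : ℕ}

lemma mvHeight_nonneg (H : HeightFn R) (P : MvR R n) : 0 ≤ mvHeight H P :=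
  (Finset.le_fold_max 0).mpr (Or.inl le_rfl)

lemma hp_coeff_le_mvHeight (H : HeightFn R) (P : MvR R n) (m : (Fin n × ℕ) →₀ ℕ) :
    H.hp (MvPolynomial.coeff m P) ≤ mvHeight H P := by
  by_cases hm : m ∈ P.support
  · exact (Finset.le_fold_max _).mpr (Or.inr ⟨m, hm, le_rfl⟩)
  · rw [MvPolynomial.notMem_support_iff.mp hm, H.hp_zero]
    exact mvHeight_nonneg H P

lemma mvHeight_le (H : HeightFn R) (P : MvR R n) {B : ℝ} (hB : 0 ≤ B)
    (h : ∀ m ∈ P.support, H.hp (MvPolynomial.coeff m P) ≤ B) : mvHeight H P ≤ B :=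
  (Finset.fold_max_le B).mpr ⟨hB, h⟩

/-! ### monomial bookkeeping -/

/-- bump all second indices by one -/
noncomputable def up (t : (Fin n × ℕ) →₀ ℕ) : (Fin n × ℕ) →₀ ℕ :=
  t.mapDomain fun v => (v.1, v.2 + 1)

lemma up_inj_dom : Function.Injective (fun v : Fin n × ℕ => (v.1, v.2 + 1)) := by
  intro a b hab
  simp only [Prod.mk.injEq] at hab
  exact Prod.ext hab.1 (by omega)

lemma up_injective : Function.Injective (up (n := n)) :=
  Finsupp.mapDomain_injective up_inj_dom

lemma up_add (a b : (Fin n × ℕ) →₀ ℕ) : up (a + b) = up a + up b :=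
  Finsupp.mapDomain_add

lemma up_single (v : Fin n × ℕ) (e : ℕ) :
    up (Finsupp.single v e) = Finsupp.single (v.1, v.2 + 1) e :=
  Finsupp.mapDomain_single

lemma support_up (t : (Fin n × ℕ) →₀ ℕ) {v : Fin n × ℕ} (hv : v ∈ (up t).support) :
    ∃ w ∈ t.support, v = (w.1, w.2 + 1) := by
  have := Finsupp.mapDomain_support (f := fun v : Fin n × ℕ => (v.1, v.2 + 1)) (s := t) hv
  rcases Finset.mem_image.mp this with ⟨w, hw, hwv⟩
  exact ⟨w, hw, hwv.symm⟩

def mdeg (m : (Fin n × ℕ) →₀ ℕ) : ℕ := m.sum fun _ e => e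

lemma mdeg_add (a b : (Fin n × ℕ) →₀ ℕ) : mdeg (a + b) = mdeg a + mdeg b := by
  unfold mdeg
  exact Finsupp.sum_add_index' (fun _ => rfl) (fun _ _ _ => rfl)

lemma mdeg_up (t : (Fin n × ℕ) →₀ ℕ) : mdeg (up t) = mdeg t := by
  unfold mdeg up
  exact Finsupp.sum_mapDomain_index (fun _ => rfl) (fun _ _ _ => rfl)

lemma mdeg_single (v : Fin n × ℕ) (e : ℕ) : mdeg (Finsupp.single v e) = e := by
  unfold mdeg
  exact Finsupp.sum_single_index rfl

lemma gdeg_add (i : Fin n) (a b : (Fin n × ℕ) →₀ ℕ) :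
    gdeg i (a + b) = gdeg i a + gdeg i b := by
  unfold gdeg
  refine Finsupp.sum_add_index' (fun _ => by simp) (fun v e1 e2 => by split <;> simp)

lemma gdeg_up (i : Fin n) (t : (Fin n × ℕ) →₀ ℕ) : gdeg i (up t) = gdeg i t := by
  unfold gdeg up
  exact Finsupp.sum_mapDomain_index (fun _ => by simp) (fun v e1 e2 => by split <;> simp)

lemma gdeg_single (i : Fin n) (v : Fin n × ℕ) (e : ℕ) :
    gdeg i (Finsupp.single v e) = if v.1 = i then e else 0 := by
  unfold gdeg
  exact Finsupp.sum_single_index (by simp)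

lemma gdeg_sub_add {i : Fin n} {t m : (Fin n × ℕ) →₀ ℕ} (h : t ≤ m) :
    gdeg i (m - t) + gdeg i t = gdeg i m := by
  rw [← gdeg_add, tsub_add_cancel_of_le h]

lemma mdeg_sub_add {t m : (Fin n × ℕ) →₀ ℕ} (h : t ≤ m) :
    mdeg (m - t) + mdeg t = mdeg m := by
  rw [← mdeg_add, tsub_add_cancel_of_le h]

lemma mdeg_eq_sum_gdeg (m : (Fin n × ℕ) →₀ ℕ) : mdeg m = ∑ i : Fin n, gdeg i m := by
  unfold mdeg gdeg Finsupp.sum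
  rw [Finset.sum_comm]
  refine Finset.sum_congr rfl fun v _ => ?_
  simp

lemma mdeg_pos {m : (Fin n × ℕ) →₀ ℕ} (h : m ≠ 0) : 1 ≤ mdeg m := by
  rcases Finsupp.support_nonempty_iff.mpr h with ⟨v, hv⟩
  have h1 : 1 ≤ m v := Nat.one_le_iff_ne_zero.mpr (Finsupp.mem_support_iff.mp hv)
  refine h1.trans ?_
  unfold mdeg
  exact Finset.single_le_sum (f := fun v => m v) (fun w _ => Nat.zero_le _) hv

lemma mdeg_eq_zero {m : (Fin n × ℕ) →₀ ℕ} (h : mdeg m = 0) : m = 0 := by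
  by_contra hm
  have := mdeg_pos (n := n) hm
  omega

/-! ### counting function -/

def bfun : ℕ → ℕ
  | 0 => 0
  | 1 => 1
  | (s+2) => 2 * bfun (s+1) + 2

lemma bfun_mono : Monotone bfun := by
  apply monotone_nat_of_le_succ
  intro s
  match s with
  | 0 => simp [bfun]
  | (s+1) => show bfun (s+1) ≤ 2 * bfun (s+1) + 2; omega

lemma pow2_le (s : ℕ) (hs : 1 ≤ s) : 4 * 2 ^ s ≤ 5 ^ s + 6 := by
  induction s with
  | zero => omega
  | succ s ih =>
    rcases Nat.eq_zero_or_pos s with h | h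
    · subst h; norm_num
    · have h1 := ih h
      have h2 : (5:ℕ) ^ s ≥ 1 := Nat.one_le_pow _ _ (by norm_num)
      have e1 : (2:ℕ) ^ (s+1) = 2 * 2 ^ s := by ring
      have e2 : (5:ℕ) ^ (s+1) = 5 * 5 ^ s := by ring
      omega

lemma key_count (s : ℕ) (hs : 1 ≤ s) : 2 ^ s * bfun s + 2 ≤ 5 ^ s := by
  induction s with
  | zero => omega
  | succ s ih =>
    rcases Nat.eq_zero_or_pos s with h | h
    · subst h; simp [bfun]
    · have h1 := ih h
      have h2 := pow2_le s h
      have e0 : bfun (s+1) = 2 * bfun s + 2 := by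
        match s, h with
        | (s+1), _ => rfl
      have e1 : (2:ℕ) ^ (s+1) = 2 * 2 ^ s := by ring
      have e2 : (5:ℕ) ^ (s+1) = 5 * 5 ^ s := by ring
      rw [e0, e1, e2]
      nlinarith [Nat.zero_le (2 ^ s * bfun s)]

end DFinite

namespace DFinite

variable {R : Type*} [CommRing R] {n : ℕ}

noncomputable def pickv (m : (Fin n × ℕ) →₀ ℕ) (h : m ≠ 0) : Fin n × ℕ :=
  (Finsupp.support_nonempty_iff.mpr h).choose

lemma pickv_mem (m : (Fin n × ℕ) →₀ ℕ) (h : m ≠ 0) : pickv m h ∈ m.support :=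
  (Finsupp.support_nonempty_iff.mpr h).choose_spec

lemma single_pickv_le (m : (Fin n × ℕ) →₀ ℕ) (h : m ≠ 0) :
    Finsupp.single (pickv m h) 1 ≤ m :=
  Finsupp.single_le_iff.mpr
    (Nat.one_le_iff_ne_zero.mpr (Finsupp.mem_support_iff.mp (pickv_mem m h)))

lemma mdeg_sub_pickv (m : (Fin n × ℕ) →₀ ℕ) (h : m ≠ 0) :
    mdeg (m - Finsupp.single (pickv m h) 1) + 1 = mdeg m := by
  have h1 := mdeg_sub_add (single_pickv_le m h)
  rwa [mdeg_single] at h1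

lemma mdeg_sub_pickv_lt (m : (Fin n × ℕ) →₀ ℕ) (h : m ≠ 0) :
    mdeg (m - Finsupp.single (pickv m h) 1) < mdeg m := by
  have := mdeg_sub_pickv m h; omega

open MvPolynomial in
noncomputable def FZ (α β γ : ℤ) (m : (Fin n × ℕ) →₀ ℕ) : MvPolynomial (Fin n × ℕ) ℤ :=
  if h0 : m = 0 then 0
  else
    let v := pickv m h0
    let m₁ := m - Finsupp.single v 1
    if m₁ = 0 then X (v.1, v.2 + 1)
    else
      α • (FZ α β γ m₁ * X (v.1, v.2 + 1)) + β • (FZ α β γ m₁ * X v)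
        + β • ((monomial m₁ 1) * X (v.1, v.2 + 1))
        + γ • ((monomial m₁ 1) * X v)
termination_by mdeg m
decreasing_by exact mdeg_sub_pickv_lt m h0

open MvPolynomial in
lemma FZ_base {α β γ : ℤ} {m : (Fin n × ℕ) →₀ ℕ} (h0 : m ≠ 0)
    (h1 : m - Finsupp.single (pickv m h0) 1 = 0) :
    FZ (n := n) α β γ m = X ((pickv m h0).1, (pickv m h0).2 + 1) := by
  rw [FZ]; rw [dif_neg h0]; simp only [h1]; simp

open MvPolynomial in
lemma FZ_step {α β γ : ℤ} {m : (Fin n × ℕ) →₀ ℕ} (h0 : m ≠ 0)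
    (h1 : m - Finsupp.single (pickv m h0) 1 ≠ 0) :
    FZ (n := n) α β γ m =
      (letI v := pickv m h0; letI m₁ := m - Finsupp.single v 1;
      α • (FZ α β γ m₁ * X (v.1, v.2 + 1)) + β • (FZ α β γ m₁ * X v)
        + β • ((MvPolynomial.monomial (R := ℤ) m₁ 1) * X (v.1, v.2 + 1))
        + γ • ((MvPolynomial.monomial (R := ℤ) m₁ 1) * X v)) := by
  rw [FZ]; rw [dif_neg h0]; rw [if_neg h1]

end DFinite

namespace DFinite

variable {R : Type*} [CommRing R] {n : ℕ}

lemma bfun_succ (s : ℕ) (hs : 1 ≤ s) : bfun (s + 1) = 2 * bfun s + 2 := by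
  match s, hs with
  | (s+1), _ => rfl

lemma four_ne_zero {Mo : Type*} [AddCommMonoid Mo] {a b c d : Mo} (h : a + b + c + d ≠ 0) :
    a ≠ 0 ∨ b ≠ 0 ∨ c ≠ 0 ∨ d ≠ 0 := by
  by_contra hcon
  push_neg at hcon
  obtain ⟨h1, h2, h3, h4⟩ := hcon
  rw [h1, h2, h3, h4] at h
  simp at h

lemma smul_coeff_ne {α' : ℤ} {p : MvPolynomial (Fin n × ℕ) ℤ} {m' : (Fin n × ℕ) →₀ ℕ}
    (h : MvPolynomial.coeff m' (α' • p) ≠ 0) : MvPolynomial.coeff m' p ≠ 0 := by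
  intro hz
  apply h
  rw [MvPolynomial.coeff_smul, hz, smul_zero]

open MvPolynomial in
lemma FZ_support {α β γ : ℤ} : ∀ (N : ℕ) (m : (Fin n × ℕ) →₀ ℕ), mdeg m ≤ N → ∀ h0 : m ≠ 0,
    ∀ m', (FZ (n := n) α β γ m).coeff m' ≠ 0 → ∃ t, t ≤ m ∧ m' = m - t + up t := by
  intro N
  induction N with
  | zero =>
    intro m hmd h0
    have := mdeg_pos (n := n) h0
    omega
  | succ N ih =>
    intro m hmd h0 m' hc
    set v := pickv m h0 with hv
    set m₁ := m - Finsupp.single v 1 with hm₁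
    have hle : Finsupp.single v 1 ≤ m := single_pickv_le m h0
    have hm_eq : m₁ + Finsupp.single v 1 = m := tsub_add_cancel_of_le hle
    have hmd₁ : mdeg m₁ + 1 = mdeg m := mdeg_sub_pickv m h0
    by_cases h1 : m₁ = 0
    · rw [FZ_base h0 h1] at hc
      rw [coeff_X'] at hc
      have hm' : Finsupp.single (v.1, v.2 + 1) 1 = m' := by
        by_contra hne; rw [if_neg hne] at hc; exact hc rfl
      have hms : m = Finsupp.single v 1 := by
        rw [← hm_eq, h1, zero_add]
      refine ⟨m, le_rfl, ?_⟩
      rw [tsub_self, zero_add, hms, up_single, hm']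
    · rw [FZ_step h0 h1] at hc
      rw [MvPolynomial.coeff_add, MvPolynomial.coeff_add, MvPolynomial.coeff_add] at hc
      rcases four_ne_zero hc with hca | hcb | hcc | hcd
      · -- α • (FZ m₁ * X v⁺)
        have hca' := smul_coeff_ne hca
        rw [coeff_mul_X'] at hca'
        by_cases hmem : (v.1, v.2+1) ∈ m'.support
        swap
        · rw [if_neg hmem] at hca'; exact absurd rfl hca'
        rw [if_pos hmem] at hca'
        obtain ⟨t₁, ht₁, heq⟩ := ih m₁ (by omega) h1 _ hca'
        refine ⟨t₁ + Finsupp.single v 1, by rw [← hm_eq]; exact add_le_add_left ht₁ _, ?_⟩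
        have hsle : Finsupp.single ((v.1, v.2+1)) 1 ≤ m' :=
          Finsupp.single_le_iff.mpr (Nat.one_le_iff_ne_zero.mpr (Finsupp.mem_support_iff.mp hmem))
        have e1 : m - (t₁ + Finsupp.single v 1) = m₁ - t₁ := by
          rw [← hm_eq]; exact add_tsub_add_eq_tsub_right _ _ _
        rw [e1, up_add, up_single]
        calc m' = m' - Finsupp.single (v.1, v.2+1) 1 + Finsupp.single (v.1, v.2+1) 1 :=
              (tsub_add_cancel_of_le hsle).symm
          _ = (m₁ - t₁ + up t₁) + Finsupp.single (v.1, v.2+1) 1 := by rw [heq]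
          _ = m₁ - t₁ + (up t₁ + Finsupp.single (v.1, v.2+1) 1) := by rw [add_assoc]
      · -- β • (FZ m₁ * X v)
        have hcb' := smul_coeff_ne hcb
        rw [coeff_mul_X'] at hcb'
        by_cases hmem : v ∈ m'.support
        swap
        · rw [if_neg hmem] at hcb'; exact absurd rfl hcb'
        rw [if_pos hmem] at hcb'
        obtain ⟨t₁, ht₁, heq⟩ := ih m₁ (by omega) h1 _ hcb'
        refine ⟨t₁, ht₁.trans (by rw [hm₁]; exact tsub_le_self), ?_⟩
        have hsle : Finsupp.single v 1 ≤ m' :=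
          Finsupp.single_le_iff.mpr (Nat.one_le_iff_ne_zero.mpr (Finsupp.mem_support_iff.mp hmem))
        have e1 : m - t₁ = Finsupp.single v 1 + (m₁ - t₁) := by
          rw [← hm_eq, add_comm m₁ (Finsupp.single v 1)]
          exact add_tsub_assoc_of_le ht₁ _
        rw [e1]
        calc m' = Finsupp.single v 1 + (m' - Finsupp.single v 1) := by
              rw [add_comm, tsub_add_cancel_of_le hsle]
          _ = Finsupp.single v 1 + (m₁ - t₁ + up t₁) := by rw [heq]
          _ = Finsupp.single v 1 + (m₁ - t₁) + up t₁ := by rw [add_assoc]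
      · -- β • (monomial m₁ 1 * X v⁺)
        have hcc' := smul_coeff_ne hcc
        rw [coeff_mul_X'] at hcc'
        by_cases hmem : (v.1, v.2+1) ∈ m'.support
        swap
        · rw [if_neg hmem] at hcc'; exact absurd rfl hcc'
        rw [if_pos hmem, MvPolynomial.coeff_monomial] at hcc'
        have hm₁' : m₁ = m' - Finsupp.single (v.1, v.2+1) 1 := by
          by_contra hne; rw [if_neg hne] at hcc'; exact hcc' rfl
        have hsle : Finsupp.single ((v.1, v.2+1)) 1 ≤ m' :=
          Finsupp.single_le_iff.mpr (Nat.one_le_iff_ne_zero.mpr (Finsupp.mem_support_iff.mp hmem))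
        refine ⟨Finsupp.single v 1, hle, ?_⟩
        rw [← hm₁, up_single, hm₁', tsub_add_cancel_of_le hsle]
      · -- γ • (monomial m₁ 1 * X v)
        have hcd' := smul_coeff_ne hcd
        rw [coeff_mul_X'] at hcd'
        by_cases hmem : v ∈ m'.support
        swap
        · rw [if_neg hmem] at hcd'; exact absurd rfl hcd'
        rw [if_pos hmem, MvPolynomial.coeff_monomial] at hcd'
        have hm₁' : m₁ = m' - Finsupp.single v 1 := by
          by_contra hne; rw [if_neg hne] at hcd'; exact hcd' rfl
        have hsle : Finsupp.single v 1 ≤ m' :=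
          Finsupp.single_le_iff.mpr (Nat.one_le_iff_ne_zero.mpr (Finsupp.mem_support_iff.mp hmem))
        refine ⟨0, zero_le, ?_⟩
        have hup0 : up (0 : (Fin n × ℕ) →₀ ℕ) = 0 := Finsupp.mapDomain_zero
        rw [hup0, tsub_zero, add_zero, ← hm_eq, hm₁', tsub_add_cancel_of_le hsle]

open MvPolynomial in
lemma FZ_coeff_bound {α β γ : ℤ} (hα1 : α.natAbs ≤ 1) (hβ1 : β.natAbs ≤ 1)
    (hγ1 : γ.natAbs ≤ 1) :
    ∀ (N : ℕ) (m : (Fin n × ℕ) →₀ ℕ), mdeg m ≤ N → m ≠ 0 →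
    ∀ m', ((FZ (n := n) α β γ m).coeff m').natAbs ≤ bfun (mdeg m) := by
  intro N
  induction N with
  | zero =>
    intro m hmd h0
    have := mdeg_pos (n := n) h0
    omega
  | succ N ih =>
    intro m hmd h0 m'
    set v := pickv m h0 with hv
    set m₁ := m - Finsupp.single v 1 with hm₁
    have hle : Finsupp.single v 1 ≤ m := single_pickv_le m h0
    have hm_eq : m₁ + Finsupp.single v 1 = m := tsub_add_cancel_of_le hle
    have hmd₁ : mdeg m₁ + 1 = mdeg m := mdeg_sub_pickv m h0
    by_cases h1 : m₁ = 0
    · rw [FZ_base h0 h1, coeff_X']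
      have hms : m = Finsupp.single v 1 := by rw [← hm_eq, h1, zero_add]
      have hdm : mdeg m = 1 := by rw [hms, mdeg_single]
      rw [hdm]
      split <;> simp [bfun]
    · rw [FZ_step h0 h1]
      rw [MvPolynomial.coeff_add, MvPolynomial.coeff_add, MvPolynomial.coeff_add,
        MvPolynomial.coeff_smul, MvPolynomial.coeff_smul, MvPolynomial.coeff_smul,
        MvPolynomial.coeff_smul]
      have hmd₁pos : 1 ≤ mdeg m₁ := mdeg_pos h1
      have hb : bfun (mdeg m) = 2 * bfun (mdeg m₁) + 2 := by
        rw [← hmd₁]; exact bfun_succ _ hmd₁pos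
      have hc1 : (coeff m' (FZ (n := n) α β γ m₁ * X (v.1, v.2+1))).natAbs ≤ bfun (mdeg m₁) := by
        rw [coeff_mul_X']
        split
        · exact ih m₁ (by omega) h1 _
        · simp
      have hc2 : (coeff m' (FZ (n := n) α β γ m₁ * X v)).natAbs ≤ bfun (mdeg m₁) := by
        rw [coeff_mul_X']
        split
        · exact ih m₁ (by omega) h1 _
        · simp
      have hc3 : (coeff m' ((monomial (R := ℤ) m₁ 1) * X (v.1, v.2+1))).natAbs ≤ 1 := by
        rw [coeff_mul_X']
        split
        · rw [MvPolynomial.coeff_monomial]; split <;> simp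
        · simp
      have hc4 : (coeff m' ((monomial (R := ℤ) m₁ 1) * X v)).natAbs ≤ 1 := by
        rw [coeff_mul_X']
        split
        · rw [MvPolynomial.coeff_monomial]; split <;> simp
        · simp
      generalize hg1 : coeff m' (FZ (n := n) α β γ m₁ * X (v.1, v.2+1)) = c1 at hc1 ⊢
      generalize hg2 : coeff m' (FZ (n := n) α β γ m₁ * X v) = c2 at hc2 ⊢
      generalize hg3 : coeff m' ((monomial (R := ℤ) m₁ 1) * X (v.1, v.2+1)) = c3 at hc3 ⊢
      generalize hg4 : coeff m' ((monomial (R := ℤ) m₁ 1) * X v) = c4 at hc4 ⊢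
      have habs : (α • c1 + β • c2 + β • c3 + γ • c4).natAbs ≤
          α.natAbs * c1.natAbs + β.natAbs * c2.natAbs + β.natAbs * c3.natAbs
            + γ.natAbs * c4.natAbs := by
        have i1 := Int.natAbs_add_le (α • c1 + β • c2 + β • c3) (γ • c4)
        have i2 := Int.natAbs_add_le (α • c1 + β • c2) (β • c3)
        have i3 := Int.natAbs_add_le (α • c1) (β • c2)
        have e1 : (α • c1).natAbs = α.natAbs * c1.natAbs := by
          rw [smul_eq_mul, Int.natAbs_mul]
        have e2 : (β • c2).natAbs = β.natAbs * c2.natAbs := by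
          rw [smul_eq_mul, Int.natAbs_mul]
        have e3 : (β • c3).natAbs = β.natAbs * c3.natAbs := by
          rw [smul_eq_mul, Int.natAbs_mul]
        have e4 : (γ • c4).natAbs = γ.natAbs * c4.natAbs := by
          rw [smul_eq_mul, Int.natAbs_mul]
        omega
      refine habs.trans ?_
      rw [hb]
      have e1 : α.natAbs * c1.natAbs ≤ bfun (mdeg m₁) :=
        (Nat.mul_le_mul hα1 hc1).trans (by omega)
      have e2 : β.natAbs * c2.natAbs ≤ bfun (mdeg m₁) :=
        (Nat.mul_le_mul hβ1 hc2).trans (by omega)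
      have e3 : β.natAbs * c3.natAbs ≤ 1 := Nat.mul_le_mul hβ1 hc3
      have e4 : γ.natAbs * c4.natAbs ≤ 1 := Nat.mul_le_mul hγ1 hc4
      omega

end DFinite

namespace DFinite

variable {R : Type*} [CommRing R] {n : ℕ}

/-- coefficientwise integer cast -/
noncomputable def castR (R : Type*) [CommRing R] (n : ℕ) :
    MvPolynomial (Fin n × ℕ) ℤ →+* MvR R n :=
  MvPolynomial.map (Int.castRingHom (Polynomial R))

open MvPolynomial in
lemma castR_coeff (p : MvPolynomial (Fin n × ℕ) ℤ) (m : (Fin n × ℕ) →₀ ℕ) :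
    coeff m (castR R n p) = ((coeff m p : ℤ) : Polynomial R) := by
  unfold castR
  rw [MvPolynomial.coeff_map]
  rfl

open MvPolynomial in
lemma X_eq_monomial (v : Fin n × ℕ) :
    (X v : MvR R n) = monomial (Finsupp.single v 1) 1 := rfl

open MvPolynomial in
lemma FZ_Dact (α β γ : ℤ) (Dact : MvR R n →+ MvR R n)
    (hXrule : ∀ (i : Fin n) (j : ℕ), Dact (X (i, j)) = X (i, j + 1))
    (hmul : ∀ P Q : MvR R n,
      Dact (P * Q) = α • (Dact P * Dact Q) + β • (Dact P * Q + P * Dact Q) + γ • (P * Q)) :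
    ∀ (N : ℕ) (m : (Fin n × ℕ) →₀ ℕ), mdeg m ≤ N → m ≠ 0 →
      Dact (monomial m (1 : Polynomial R)) = castR R n (FZ α β γ m) := by
  have hX : ∀ v : Fin n × ℕ, Dact (X v) = X (v.1, v.2 + 1) := by
    intro v
    have := hXrule v.1 v.2
    simpa using this
  intro N
  induction N with
  | zero =>
    intro m hmd h0
    have := mdeg_pos (n := n) h0
    omega
  | succ N ih =>
    intro m hmd h0
    set v := pickv m h0 with hv
    set m₁ := m - Finsupp.single v 1 with hm₁
    have hle : Finsupp.single v 1 ≤ m := single_pickv_le m h0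
    have hm_eq : m₁ + Finsupp.single v 1 = m := tsub_add_cancel_of_le hle
    have hmd₁ : mdeg m₁ + 1 = mdeg m := mdeg_sub_pickv m h0
    by_cases h1 : m₁ = 0
    · have hms : m = Finsupp.single v 1 := by rw [← hm_eq, h1, zero_add]
      have e : (monomial m (1 : Polynomial R)) = X v := by
        rw [X_eq_monomial, hms]
      rw [FZ_base h0 h1, e, hX v]
      unfold castR
      rw [MvPolynomial.map_X]
    · have e1 : monomial m (1 : Polynomial R) = monomial m₁ 1 * X v := by
        rw [X_eq_monomial, monomial_mul, one_mul, hm_eq]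
      rw [e1, hmul, hX v, ih m₁ (by omega) h1]
      rw [FZ_step h0 h1]
      simp only [map_add, map_zsmul, map_mul]
      unfold castR
      simp only [MvPolynomial.map_X, MvPolynomial.map_monomial, map_one, smul_add]
      rw [← hv, ← hm₁]
      ring

open MvPolynomial in
lemma Dact_one [IsDomain R] (i₀ : Fin n)
    {α β γ : ℤ}
    (hα : α = 0 ∨ α = 1 ∨ α = -1) (hβ : β = 0 ∨ β = 1 ∨ β = -1)
    (hγ : γ = 0 ∨ γ = 1 ∨ γ = -1)
    (Dact : MvR R n →+ MvR R n)
    (hXrule : ∀ (i : Fin n) (j : ℕ), Dact (X (i, j)) = X (i, j + 1))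
    (hmul : ∀ P Q : MvR R n,
      Dact (P * Q) = α • (Dact P * Dact Q) + β • (Dact P * Q + P * Dact Q) + γ • (P * Q)) :
    ∃ ε : ℤ, ε.natAbs ≤ 1 ∧ Dact 1 = MvPolynomial.C ((ε : Polynomial R)) := by
  classical
  set E : MvR R n := Dact 1 with hE
  set S : ℕ := E.support.sup fun m => m.support.sup fun w => w.2 with hS
  set J : ℕ := S + 1 with hJ
  have hbig : ∀ m ∈ E.support, ∀ j, j ≥ J → m (i₀, j) = 0 := by
    intro m hm j hj
    by_contra hz
    have hw : (i₀, j) ∈ m.support := Finsupp.mem_support_iff.mpr hz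
    have h1 : j ≤ m.support.sup fun w => w.2 :=
      Finset.le_sup (f := fun w : Fin n × ℕ => w.2) hw
    have h2 : (m.support.sup fun w => w.2) ≤ S :=
      Finset.le_sup (f := fun m : (Fin n × ℕ) →₀ ℕ => m.support.sup fun w => w.2) hm
    omega
  have probe : (X (i₀, J+1) : MvR R n) =
      α • (E * X (i₀, J+1)) + β • (E * X (i₀, J) + X (i₀, J+1)) + γ • X (i₀, J) := by
    have h0 := hmul 1 (X (i₀, J))
    simp only [one_mul] at h0
    rw [hXrule i₀ J] at h0
    exact h0
  have hco : ∀ u : (Fin n × ℕ) →₀ ℕ, coeff u (X (i₀, J+1) : MvR R n) =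
      α • coeff u (E * X (i₀, J+1)) + β • (coeff u (E * X (i₀, J)) + coeff u (X (i₀, J+1) : MvR R n))
        + γ • coeff u (X (i₀, J) : MvR R n) := by
    intro u
    conv_lhs => rw [probe]
    rw [MvPolynomial.coeff_add, MvPolynomial.coeff_add, MvPolynomial.coeff_smul,
      MvPolynomial.coeff_smul, MvPolynomial.coeff_smul, MvPolynomial.coeff_add]
  have hne_ww' : ((i₀, J) : Fin n × ℕ) ≠ (i₀, J+1) := by simp
  set e₀ : Polynomial R := E.coeff 0 with he₀
  have single_ne : ∀ (w : Fin n × ℕ) (m : (Fin n × ℕ) →₀ ℕ), m ≠ 0 →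
      Finsupp.single w 1 ≠ m + Finsupp.single w 1 := by
    intro w m hm hcon
    apply hm
    have h2 : (0 : (Fin n × ℕ) →₀ ℕ) + Finsupp.single w 1 = m + Finsupp.single w 1 := by
      rw [zero_add]; exact hcon
    exact (add_right_cancel h2).symm
  -- claim C1
  have C1 : (1 : Polynomial R) = α • e₀ + β • 1 := by
    have h := hco (Finsupp.single (i₀, J+1) 1)
    have e1 : coeff (Finsupp.single (i₀, J+1) 1) (X (i₀, J+1) : MvR R n) = 1 := by
      rw [coeff_X', if_pos rfl]
    have e2 : coeff (Finsupp.single (i₀, J+1) 1) (E * X (i₀, J+1)) = e₀ := by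
      rw [coeff_mul_X', if_pos (by simp), tsub_self, he₀]
    have e3 : coeff (Finsupp.single (i₀, J+1) 1) (E * X (i₀, J)) = 0 := by
      rw [coeff_mul_X', if_neg]
      simp only [Finsupp.mem_support_iff, Finsupp.single_apply, ne_eq]
      rw [if_neg hne_ww'.symm]
      simp
    have e4 : coeff (Finsupp.single (i₀, J+1) 1) (X (i₀, J) : MvR R n) = 0 := by
      rw [coeff_X', if_neg]
      intro hcon
      exact hne_ww' ((Finsupp.single_left_inj one_ne_zero).mp hcon)
    rw [e1, e2, e3, e4, smul_zero, add_zero, zero_add] at h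
    exact h
  -- claim C2
  have C2 : (0 : Polynomial R) = β • e₀ + γ • 1 := by
    have h := hco (Finsupp.single (i₀, J) 1)
    have e1 : coeff (Finsupp.single (i₀, J) 1) (X (i₀, J+1) : MvR R n) = 0 := by
      rw [coeff_X', if_neg]
      intro hcon
      exact hne_ww' ((Finsupp.single_left_inj one_ne_zero).mp hcon).symm
    have e2 : coeff (Finsupp.single (i₀, J) 1) (E * X (i₀, J+1)) = 0 := by
      rw [coeff_mul_X', if_neg]
      simp only [Finsupp.mem_support_iff, Finsupp.single_apply, ne_eq]
      rw [if_neg hne_ww']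
      simp
    have e3 : coeff (Finsupp.single (i₀, J) 1) (E * X (i₀, J)) = e₀ := by
      rw [coeff_mul_X', if_pos (by simp), tsub_self, he₀]
    have e4 : coeff (Finsupp.single (i₀, J) 1) (X (i₀, J) : MvR R n) = 1 := by
      rw [coeff_X', if_pos rfl]
    rw [e1, e2, e3, e4, smul_zero, zero_add, add_zero] at h
    exact h
  -- claims C3/C4
  have C3 : ∀ m : (Fin n × ℕ) →₀ ℕ, m ≠ 0 → α • E.coeff m = 0 := by
    intro m hm
    by_cases hmem : m ∈ E.support
    swap
    · rw [MvPolynomial.notMem_support_iff.mp hmem, smul_zero]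
    have hmJ : m (i₀, J) = 0 := hbig m hmem J (le_refl J)
    set u := m + Finsupp.single (i₀, J+1) 1 with hu
    have h := hco u
    have e1 : coeff u (X (i₀, J+1) : MvR R n) = 0 := by
      rw [coeff_X', if_neg (single_ne _ m hm)]
    have e2 : coeff u (E * X (i₀, J+1)) = E.coeff m := by
      rw [coeff_mul_X', if_pos (by simp [hu]), hu, add_tsub_cancel_right]
    have e3 : coeff u (E * X (i₀, J)) = 0 := by
      rw [coeff_mul_X', if_neg]
      simp only [hu, Finsupp.mem_support_iff, Finsupp.add_apply, Finsupp.single_apply, ne_eq]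
      rw [if_neg hne_ww'.symm]
      simp [hmJ]
    have e4 : coeff u (X (i₀, J) : MvR R n) = 0 := by
      rw [coeff_X', if_neg]
      intro hcon
      have h2 := congrArg (fun f : (Fin n × ℕ) →₀ ℕ => f (i₀, J+1)) hcon
      simp only [hu, Finsupp.single_apply, Finsupp.add_apply] at h2
      rw [if_neg hne_ww'] at h2
      simp at h2
    rw [e1, e2, e3, e4, smul_zero, zero_add, smul_zero, add_zero, add_zero] at h
    exact h.symm
  have C4 : ∀ m : (Fin n × ℕ) →₀ ℕ, m ≠ 0 → β • E.coeff m = 0 := by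
    intro m hm
    by_cases hmem : m ∈ E.support
    swap
    · rw [MvPolynomial.notMem_support_iff.mp hmem, smul_zero]
    have hmJ' : m (i₀, J+1) = 0 := hbig m hmem (J+1) (by omega)
    set u := m + Finsupp.single (i₀, J) 1 with hu
    have h := hco u
    have e1 : coeff u (X (i₀, J+1) : MvR R n) = 0 := by
      rw [coeff_X', if_neg]
      intro hcon
      have h2 := congrArg (fun f : (Fin n × ℕ) →₀ ℕ => f (i₀, J)) hcon
      simp only [hu, Finsupp.single_apply, Finsupp.add_apply] at h2
      rw [if_neg hne_ww'.symm] at h2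
      simp at h2
    have e2 : coeff u (E * X (i₀, J+1)) = 0 := by
      rw [coeff_mul_X', if_neg]
      simp only [hu, Finsupp.mem_support_iff, Finsupp.add_apply, Finsupp.single_apply, ne_eq]
      rw [if_neg hne_ww']
      simp [hmJ']
    have e3 : coeff u (E * X (i₀, J)) = E.coeff m := by
      rw [coeff_mul_X', if_pos (by simp [hu]), hu, add_tsub_cancel_right]
    have e4 : coeff u (X (i₀, J) : MvR R n) = 0 := by
      rw [coeff_X', if_neg (single_ne _ m hm)]
    rw [e1, e2, e3, e4, smul_zero, smul_zero, add_zero, add_zero, zero_add] at h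
    exact h.symm
  -- from vanishing of higher coefficients, E is a constant
  have hEC : (∀ m : (Fin n × ℕ) →₀ ℕ, m ≠ 0 → E.coeff m = 0) →
      E = MvPolynomial.C e₀ := by
    intro hvan
    apply MvPolynomial.ext
    intro u
    rw [MvPolynomial.coeff_C]
    by_cases hu : (0 : (Fin n × ℕ) →₀ ℕ) = u
    · rw [if_pos hu, ← hu, he₀]
    · rw [if_neg hu]
      exact hvan u (Ne.symm hu)
  rw [zsmul_eq_mul, zsmul_eq_mul, mul_one] at C1
  rw [zsmul_eq_mul, zsmul_eq_mul, mul_one] at C2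
  rcases hβ with hβ0 | hβ1 | hβm
  · -- β = 0 : use C1 and C3
    subst hβ0
    rcases hα with hα0 | hα1 | hαm
    · subst hα0
      exfalso
      simp only [Int.cast_zero, zero_mul, zero_add, add_zero] at C1
      exact one_ne_zero C1
    · subst hα1
      refine ⟨1, by norm_num, ?_⟩
      rw [hEC fun m hm => by simpa using C3 m hm]
      congr 1
      push_cast at C1 ⊢
      linear_combination -C1
    · subst hαm
      refine ⟨-1, by norm_num, ?_⟩
      rw [hEC fun m hm => by simpa [neg_eq_zero] using C3 m hm]
      congr 1
      push_cast at C1 ⊢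
      linear_combination C1
  · -- β = 1 : use C2 and C4
    subst hβ1
    refine ⟨-γ, by rcases hγ with h|h|h <;> subst h <;> norm_num, ?_⟩
    rw [hEC fun m hm => by simpa using C4 m hm]
    congr 1
    push_cast at C2 ⊢
    linear_combination -C2
  · -- β = -1 : use C2 and C4
    subst hβm
    refine ⟨γ, by rcases hγ with h|h|h <;> subst h <;> norm_num, ?_⟩
    rw [hEC fun m hm => by simpa [neg_eq_zero] using C4 m hm]
    congr 1
    push_cast at C2 ⊢
    linear_combination C2

end DFinite


/-- `k`-fold iteration of `c` in its second argument. -/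
def citer (c : ℝ → ℝ → ℝ) : ℕ → ℝ → ℝ → ℝ
  | 0, _, b => b
  | k + 1, a, b => c a (citer c k a b)


lemma citer_nonneg (c : ℝ → ℝ → ℝ) (hc0 : ∀ a b, 0 ≤ c a b) {d h₀ : ℝ} (hh₀ : 0 ≤ h₀) :
    ∀ k, 0 ≤ citer c k d h₀
  | 0 => hh₀
  | (k+1) => hc0 _ _

lemma citer_succ (c : ℝ → ℝ → ℝ) (k : ℕ) (a b : ℝ) :
    citer c (k+1) a b = c a (citer c k a b) := rfl

namespace DFinite

variable {R : Type*} [CommRing R] {n : ℕ}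

lemma gdeg_zero (i : Fin n) : gdeg i (0 : (Fin n × ℕ) →₀ ℕ) = 0 :=
  Finsupp.sum_zero_index

noncomputable def expandL (σ' : Polynomial R →+* Polynomial R) (z : ℤ) (f : Polynomial R) :
    List (Polynomial R) :=
  List.replicate z.natAbs (if 0 ≤ z then σ' f else -(σ' f))

lemma expandL_sum (σ' : Polynomial R →+* Polynomial R) (z : ℤ) (f : Polynomial R) :
    (expandL σ' z f).sum = z • σ' f := by
  unfold expandL
  rw [List.sum_replicate]
  by_cases hz : 0 ≤ z
  · rw [if_pos hz]
    conv_rhs => rw [show z = (z.natAbs : ℤ) by omega]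
    rw [natCast_zsmul]
  · rw [if_neg hz]
    conv_rhs => rw [show z = -(z.natAbs : ℤ) by omega]
    rw [neg_zsmul, natCast_zsmul, smul_neg]

lemma flatMap_expandL_sum (σ' : Polynomial R →+* Polynomial R) (z : ℤ) :
    ∀ L : List (Polynomial R), (L.flatMap (expandL σ' z)).sum = z • σ' L.sum := by
  intro L
  induction L with
  | nil => simp
  | cons a L ih =>
    rw [List.flatMap_cons, List.sum_append, expandL_sum, ih, List.sum_cons, map_add, smul_add]

lemma flatMap_expandL_length (σ' : Polynomial R →+* Polynomial R) (z : ℤ)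
    (L : List (Polynomial R)) :
    (L.flatMap (expandL σ' z)).length = z.natAbs * L.length := by
  induction L with
  | nil => simp
  | cons a L ih =>
    rw [List.flatMap_cons, List.length_append, ih]
    unfold expandL
    rw [List.length_replicate, List.length_cons]
    ring

lemma mem_expandL {σ' : Polynomial R →+* Polynomial R} {z : ℤ} {f g : Polynomial R}
    (h : g ∈ expandL σ' z f) : g = σ' f ∨ g = -(σ' f) := by
  unfold expandL at h
  have := List.eq_of_mem_replicate h
  by_cases hz : 0 ≤ z
  · rw [if_pos hz] at this; exact Or.inl this
  · rw [if_neg hz] at this; exact Or.inr this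

lemma list_sum_flatMap {A B : Type*} [AddCommMonoid B] (l : List A) (g : A → List B) :
    (l.flatMap g).sum = (l.map fun a => (g a).sum).sum := by
  induction l with
  | nil => simp
  | cons a l ih => rw [List.flatMap_cons, List.sum_append, ih, List.map_cons, List.sum_cons]

lemma natDegree_list_sum_le' {d : ℕ} (L : List (Polynomial R))
    (h : ∀ f ∈ L, f.natDegree ≤ d) : L.sum.natDegree ≤ d := by
  induction L with
  | nil => simp
  | cons a L ih =>
    rw [List.sum_cons]
    refine (Polynomial.natDegree_add_le _ _).trans ?_
    exact max_le (h a (List.mem_cons_self)) (ih fun f hf => h f (List.mem_cons_of_mem _ hf))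

open MvPolynomial in
lemma step_lemma [IsDomain R] (H : HeightFn R)
    (σ' : Polynomial R →+* Polynomial R) (δ' : Polynomial R →+ Polynomial R)
    (hσdeg : ∀ p : Polynomial R, (σ' p).degree ≤ p.degree)
    (hδdeg : ∀ p : Polynomial R, (δ' p).degree ≤ p.degree)
    (c : ℝ → ℝ → ℝ) (hc0 : ∀ a b : ℝ, 0 ≤ c a b)
    (hc : ∀ (d B : ℝ) (p q : Polynomial R), (p.natDegree : ℝ) ≤ d →
      (q.natDegree : ℝ) ≤ d → H.hp p ≤ B → H.hp q ≤ B →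
      H.hp (σ' p + δ' q) ≤ c d B ∧ H.hp (-σ' p + δ' q) ≤ c d B)
    {α β γ : ℤ} (hα1 : α.natAbs ≤ 1) (hβ1 : β.natAbs ≤ 1) (hγ1 : γ.natAbs ≤ 1)
    (Dact : MvR R n →+ MvR R n)
    (hXrule : ∀ (i : Fin n) (j : ℕ), Dact (X (i, j)) = X (i, j + 1))
    (hCrule : ∀ (p : Polynomial R) (P : MvR R n),
      Dact (MvPolynomial.C p * P) = MvPolynomial.C (σ' p) * Dact P + MvPolynomial.C (δ' p) * P)
    (hmul : ∀ P Q : MvR R n,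
      Dact (P * Q) = α • (Dact P * Dact Q) + β • (Dact P * Q + P * Dact Q) + γ • (P * Q))
    (ε : ℤ) (hε1 : ε.natAbs ≤ 1) (hDact1 : Dact 1 = MvPolynomial.C ((ε : Polynomial R)))
    (Dv Sv : Fin n → ℕ) (hs : 1 ≤ ∑ i, Dv i)
    (d : ℕ) (h₀ : ℝ) (hh₀ : 0 ≤ h₀)
    (k : ℕ) (Q : MvR R n)
    (hA1 : ∀ m ∈ Q.support, (∀ v ∈ m.support, v.2 ≤ Sv v.1 + k) ∧ ∀ i, gdeg i m ≤ Dv i)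
    (hA2 : ∀ m', ∃ L : List (Polynomial R), MvPolynomial.coeff m' Q = L.sum ∧
      L.length ≤ 5 ^ (k * ∑ i, Dv i) ∧
      ∀ f ∈ L, f.natDegree ≤ d ∧ H.hp f ≤ citer c k (d : ℝ) h₀) :
    (∀ m ∈ (Dact Q).support, (∀ v ∈ m.support, v.2 ≤ Sv v.1 + (k+1)) ∧
        ∀ i, gdeg i m ≤ Dv i) ∧
    (∀ m', ∃ L : List (Polynomial R), MvPolynomial.coeff m' (Dact Q) = L.sum ∧
      L.length ≤ 5 ^ ((k+1) * ∑ i, Dv i) ∧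
      ∀ f ∈ L, f.natDegree ≤ d ∧ H.hp f ≤ citer c (k+1) (d : ℝ) h₀) := by
  classical
  set s := ∑ i, Dv i with hs_def
  have hmdeg_le : ∀ m ∈ Q.support, mdeg m ≤ s := by
    intro m hm
    rw [mdeg_eq_sum_gdeg]
    exact Finset.sum_le_sum fun i _ => (hA1 m hm).2 i
  -- key formula for Dact Q
  have key : Dact Q = ∑ m ∈ Q.support,
      (if m = 0 then MvPolynomial.C ((↑ε) * σ' (coeff 0 Q) + δ' (coeff 0 Q))
       else MvPolynomial.C (σ' (coeff m Q)) * castR R n (FZ α β γ m)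
          + MvPolynomial.C (δ' (coeff m Q)) * monomial m 1) := by
    conv_lhs => rw [MvPolynomial.as_sum Q]
    rw [map_sum]
    refine Finset.sum_congr rfl fun m hm => ?_
    by_cases hm0 : m = 0
    · subst hm0
      rw [if_pos rfl]
      have e : (monomial (0 : (Fin n × ℕ) →₀ ℕ)) (coeff 0 Q)
          = MvPolynomial.C (coeff 0 Q) * 1 := by
        rw [mul_one]
        exact congrFun MvPolynomial.monomial_zero' (coeff 0 Q)
      rw [e, hCrule, hDact1, mul_one, ← MvPolynomial.C_mul, ← MvPolynomial.C_add]
      congr 1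
      ring
    · rw [if_neg hm0]
      have e : (monomial m) (coeff m Q) = MvPolynomial.C (coeff m Q) * monomial m 1 := by
        rw [MvPolynomial.C_mul_monomial, mul_one]
      rw [e, hCrule, FZ_Dact α β γ Dact hXrule hmul (mdeg m) m le_rfl hm0]
  -- coefficient formula
  have coeffkey : ∀ m' : (Fin n × ℕ) →₀ ℕ, coeff m' (Dact Q) = ∑ m ∈ Q.support,
      ((if m = 0 then (if m' = 0 then ε else 0) else (FZ (n := n) α β γ m).coeff m')
          • σ' (coeff m Q)
        + if m = m' then δ' (coeff m Q) else 0) := by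
    intro m'
    rw [key, MvPolynomial.coeff_sum]
    refine Finset.sum_congr rfl fun m hm => ?_
    by_cases hm0 : m = 0
    · subst hm0
      rw [if_pos rfl, if_pos rfl, MvPolynomial.coeff_C]
      by_cases hm' : m' = 0
      · subst hm'
        rw [if_pos rfl, if_pos rfl, if_pos rfl, zsmul_eq_mul]
      · rw [if_neg (fun h => hm' h.symm), if_neg hm', if_neg (fun h => hm' h.symm)]
        simp
    · rw [if_neg hm0, if_neg hm0, MvPolynomial.coeff_add, MvPolynomial.coeff_C_mul,
        MvPolynomial.coeff_C_mul, castR_coeff, MvPolynomial.coeff_monomial]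
      rw [zsmul_eq_mul]
      by_cases hmm : m = m' <;> simp [hmm, mul_comm]
  -- choose the level-k representations
  choose L hLsum hLlen hLbound using hA2
  have hciter : 0 ≤ citer c k (d : ℝ) h₀ := citer_nonneg c hc0 hh₀ k
  constructor
  · -- part (i)-(ii)
    intro m' hm'
    have hcne : coeff m' (Dact Q) ≠ 0 := MvPolynomial.mem_support_iff.mp hm'
    rw [coeffkey m'] at hcne
    obtain ⟨m, hm, hne⟩ : ∃ m ∈ Q.support,
        ((if m = 0 then (if m' = 0 then ε else 0) else (FZ (n := n) α β γ m).coeff m')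
          • σ' (coeff m Q) + if m = m' then δ' (coeff m Q) else 0) ≠ 0 := by
      by_contra hcon
      push_neg at hcon
      exact hcne (Finset.sum_eq_zero hcon)
    by_cases hz : (if m = 0 then (if m' = 0 then ε else 0)
        else (FZ (n := n) α β γ m).coeff m') = 0
    · rw [hz, zero_smul, zero_add] at hne
      have hmm : m = m' := by
        by_contra hcon
        rw [if_neg hcon] at hne
        exact hne rfl
      subst hmm
      exact ⟨fun v hv => ((hA1 m hm).1 v hv).trans (by omega), (hA1 m hm).2⟩
    · by_cases hm0 : m = 0
      · rw [if_pos hm0] at hz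
        have hm'0 : m' = 0 := by
          by_contra hcon
          rw [if_neg hcon] at hz
          exact hz rfl
        subst hm'0
        constructor
        · intro v hv; simp at hv
        · intro i; rw [gdeg_zero]; exact Nat.zero_le _
      · rw [if_neg hm0] at hz
        obtain ⟨t, ht, heq⟩ := FZ_support (mdeg m) m le_rfl hm0 m' hz
        have htle := Finsupp.le_def.mp ht
        constructor
        · intro v hv
          rw [heq] at hv
          rcases Finset.mem_union.mp (Finsupp.support_add hv) with hv1 | hv2
          · have : m v ≠ 0 := by
              have h1 := Finsupp.mem_support_iff.mp hv1
              rw [Finsupp.tsub_apply] at h1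
              omega
            have := (hA1 m hm).1 v (Finsupp.mem_support_iff.mpr this)
            omega
          · obtain ⟨w, hw, hvw⟩ := support_up t hv2
            have : m w ≠ 0 := by
              have h1 := Finsupp.mem_support_iff.mp hw
              have := htle w
              omega
            have hb := (hA1 m hm).1 w (Finsupp.mem_support_iff.mpr this)
            rw [hvw]
            simpa using by omega
        · intro i
          have : gdeg i m' = gdeg i m := by
            rw [heq, gdeg_add, gdeg_up]
            exact gdeg_sub_add ht
          rw [this]
          exact (hA1 m hm).2 i
  · -- part (iii)-(iv) : representation for Dact Q
    intro m'
    by_cases hcz : coeff m' (Dact Q) = 0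
    · exact ⟨[], by simp [hcz], Nat.zero_le _, by simp⟩
    set zf : ((Fin n × ℕ) →₀ ℕ) → ℤ := fun m =>
      if m = 0 then (if m' = 0 then ε else 0) else (FZ (n := n) α β γ m).coeff m' with hzf
    set glist : ((Fin n × ℕ) →₀ ℕ) → List (Polynomial R) := fun m =>
      ((L m).flatMap (expandL σ' (zf m))) ++
        (if m = m' then (L m).map (fun f => δ' f) else []) with hglist
    refine ⟨Q.support.toList.flatMap glist, ?_, ?_, ?_⟩
    · -- sum
      have hLL : (Q.support.toList.flatMap glist).sum = ∑ m ∈ Q.support, (glist m).sum := by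
        rw [list_sum_flatMap, Finset.sum_map_toList]
      rw [coeffkey m', hLL]
      refine Finset.sum_congr rfl fun m hm => ?_
      rw [hglist]
      rw [List.sum_append, flatMap_expandL_sum, ← hLsum m]
      congr 1
      by_cases hmm : m = m'
      · rw [if_pos hmm, if_pos hmm, ← map_list_sum δ' (L m), ← hLsum m]
      · rw [if_neg hmm, if_neg hmm]
        rfl
    · -- length
      have hLLlen : (Q.support.toList.flatMap glist).length
          = ∑ m ∈ Q.support, (glist m).length := by
        rw [List.length_flatMap, Finset.sum_map_toList]
      rw [hLLlen]
      have hlen_each : ∀ m ∈ Q.support, (glist m).length ≤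
          (zf m).natAbs * 5 ^ (k * s) + (if m = m' then 5 ^ (k * s) else 0) := by
        intro m hm
        rw [hglist]
        rw [List.length_append, flatMap_expandL_length]
        gcongr
        · exact hLlen m
        · by_cases hmm : m = m'
          · rw [if_pos hmm, if_pos hmm, List.length_map]; exact hLlen m
          · rw [if_neg hmm, if_neg hmm]; exact le_rfl
      have hsum1 : ∑ m ∈ Q.support, (glist m).length ≤
          (∑ m ∈ Q.support, (zf m).natAbs) * 5 ^ (k * s) + 5 ^ (k * s) := by
        refine (Finset.sum_le_sum hlen_each).trans ?_
        rw [Finset.sum_add_distrib, ← Finset.sum_mul]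
        gcongr
        rw [Finset.sum_ite_eq' Q.support m' (fun _ => 5 ^ (k * s))]
        split <;> simp
      -- counting bound : ∑ |zf| + 1 ≤ 5 ^ s
      have hcount : (∑ m ∈ Q.support, (zf m).natAbs) + 1 ≤ 5 ^ s := by
        have hsplit := Finset.sum_filter_add_sum_filter_not Q.support (fun m => m = 0)
          (fun m => (zf m).natAbs)
        have h0part : ∑ m ∈ Q.support.filter (fun m => m = 0), (zf m).natAbs ≤ 1 := by
          have hsub : Q.support.filter (fun m => m = 0) ⊆ {0} := by
            intro x hx
            rcases Finset.mem_filter.mp hx with ⟨_, hx0⟩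
            simp [hx0]
          refine (Finset.sum_le_sum_of_subset hsub).trans ?_
          rw [Finset.sum_singleton]
          by_cases hm'0 : m' = 0 <;> simp [hzf, hm'0, hε1]
        set T := Q.support.filter (fun m => ¬ m = 0 ∧ (FZ (n := n) α β γ m).coeff m' ≠ 0)
          with hT
        have hTsub : T ⊆ Q.support.filter (fun m => ¬ m = 0) := by
          intro x hx
          rcases Finset.mem_filter.mp hx with ⟨h1, h2, _⟩
          exact Finset.mem_filter.mpr ⟨h1, h2⟩
        have hTeq : ∑ m ∈ Q.support.filter (fun m => ¬ m = 0), (zf m).natAbs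
            = ∑ m ∈ T, (zf m).natAbs := by
          refine (Finset.sum_subset hTsub ?_).symm
          intro x hx hnx
          rcases Finset.mem_filter.mp hx with ⟨hx1, hx2⟩
          have : (FZ (n := n) α β γ x).coeff m' = 0 := by
            by_contra hcon
            exact hnx (Finset.mem_filter.mpr ⟨hx1, hx2, hcon⟩)
          rw [hzf]
          simp only [if_neg hx2, this, Int.natAbs_zero]
        have hperT : ∀ m ∈ T, (zf m).natAbs ≤ bfun s := by
          intro m hm
          rcases Finset.mem_filter.mp hm with ⟨hm1, hm2, _⟩
          rw [hzf]
          simp only [if_neg hm2]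
          refine (FZ_coeff_bound hα1 hβ1 hγ1 (mdeg m) m le_rfl hm2 m').trans ?_
          exact bfun_mono (hmdeg_le m hm1)
        have hTcard : T.card ≤ 2 ^ s := by
          rcases Finset.eq_empty_or_nonempty T with hTe | ⟨m₀, hm₀⟩
          · rw [hTe]; simp
          · have hch : ∀ m ∈ T, ∃ t, t ≤ m ∧ m' = m - t + up t := by
              intro m hm
              rcases Finset.mem_filter.mp hm with ⟨_, hm2, hm3⟩
              exact FZ_support (mdeg m) m le_rfl hm2 m' hm3
            choose! t ht1 ht2 using hch
            have hrec : ∀ m ∈ T, m = m' - up (t m) + t m := by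
              intro m hm
              rw [ht2 m hm, add_tsub_cancel_right, tsub_add_cancel_of_le (ht1 m hm)]
            have hmdm' : mdeg m' ≤ s := by
              have e1 : mdeg m' = mdeg m₀ := by
                rw [ht2 m₀ hm₀, mdeg_add, mdeg_up]
                exact mdeg_sub_add (ht1 m₀ hm₀)
              rw [e1]
              exact hmdeg_le m₀ (Finset.mem_filter.mp hm₀).1
            have hmap : ∀ m ∈ T, up (t m) ∈ Finset.Iic m' := by
              intro m hm
              rw [Finset.mem_Iic, ht2 m hm]
              exact le_add_self
            have hinj : Set.InjOn (fun m => up (t m)) T := by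
              intro m₁ h₁ m₂ h₂ heq
              simp only at heq
              have e := up_injective heq
              rw [hrec m₁ h₁, hrec m₂ h₂, heq, e]
            have hcard := Finset.card_le_card_of_injOn _ hmap hinj
            have hIic : (Finset.Iic m').card ≤ 2 ^ s := by
              rw [Finsupp.card_Iic]
              calc ∏ v ∈ m'.support, (Finset.Iic (m' v)).card
                  = ∏ v ∈ m'.support, (m' v + 1) :=
                    Finset.prod_congr rfl fun v _ => Nat.card_Iic _
                _ ≤ ∏ v ∈ m'.support, 2 ^ (m' v) :=
                    Finset.prod_le_prod' fun v _ => Nat.succ_le_of_lt Nat.lt_two_pow_self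
                _ = 2 ^ (∑ v ∈ m'.support, m' v) := Finset.prod_pow_eq_pow_sum _ _ _
                _ = 2 ^ (mdeg m') := by rw [mdeg, Finsupp.sum]
                _ ≤ 2 ^ s := Nat.pow_le_pow_right (by norm_num) hmdm'
            exact hcard.trans hIic
        have hTsum : ∑ m ∈ T, (zf m).natAbs ≤ 2 ^ s * bfun s := by
          refine (Finset.sum_le_card_nsmul T _ (bfun s) hperT).trans ?_
          rw [smul_eq_mul]
          exact Nat.mul_le_mul_right _ hTcard
        have hkc := key_count s hs
        omega
      refine hsum1.trans ?_
      have e1 : (∑ m ∈ Q.support, (zf m).natAbs) * 5 ^ (k * s) + 5 ^ (k * s)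
          = ((∑ m ∈ Q.support, (zf m).natAbs) + 1) * 5 ^ (k * s) := by ring
      rw [e1]
      calc ((∑ m ∈ Q.support, (zf m).natAbs) + 1) * 5 ^ (k * s)
          ≤ 5 ^ s * 5 ^ (k * s) := Nat.mul_le_mul_right _ hcount
        _ = 5 ^ ((k+1) * s) := by rw [← pow_add]; ring_nf
    · -- leaf bounds
      intro f hf
      rw [List.mem_flatMap] at hf
      obtain ⟨m, hmtl, hfg⟩ := hf
      rw [hglist, List.mem_append] at hfg
      rcases hfg with hf1 | hf2
      · rw [List.mem_flatMap] at hf1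
        obtain ⟨f₀, hf₀, hfe⟩ := hf1
        obtain ⟨hdeg₀, hhp₀⟩ := hLbound m f₀ hf₀
        have hhc := hc (d : ℝ) (citer c k (d : ℝ) h₀) f₀ 0
          (by exact_mod_cast hdeg₀) (by simp) hhp₀ (by rw [H.hp_zero]; exact hciter)
        have h1 : H.hp (σ' f₀) ≤ citer c (k+1) (d : ℝ) h₀ := by
          have := hhc.1
          rwa [map_zero, add_zero] at this
        have h2 : H.hp (-(σ' f₀)) ≤ citer c (k+1) (d : ℝ) h₀ := by
          have := hhc.2
          rwa [map_zero, add_zero] at this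
        have hdege : (σ' f₀).natDegree ≤ d :=
          (Polynomial.natDegree_le_natDegree (hσdeg f₀)).trans hdeg₀
        rcases mem_expandL hfe with rfl | rfl
        · exact ⟨hdege, h1⟩
        · exact ⟨by rwa [Polynomial.natDegree_neg], h2⟩
      · by_cases hmm : m = m'
        swap
        · rw [if_neg hmm] at hf2; simp at hf2
        rw [if_pos hmm, List.mem_map] at hf2
        obtain ⟨f₀, hf₀, rfl⟩ := hf2
        obtain ⟨hdeg₀, hhp₀⟩ := hLbound m f₀ hf₀
        have hhc := hc (d : ℝ) (citer c k (d : ℝ) h₀) 0 f₀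
          (by simp) (by exact_mod_cast hdeg₀) (by rw [H.hp_zero]; exact hciter) hhp₀
        refine ⟨(Polynomial.natDegree_le_natDegree (hδdeg f₀)).trans hdeg₀, ?_⟩
        have := hhc.1
        rwa [map_zero, zero_add] at this

end DFinite

open DFinite MvPolynomial in
/-- bounds for `∂^k·P` in `𝐑 = R[x][y_{i,j}]`.  (i) the maximal
second index in each group grows by at most `k`; (ii) the `y`-multi-degree does not
increase; (iii) the `x`-degree does not increase; (iv) the height is bounded by
`k·h(4)·ΣD_i + c^{(k)}(deg_x P, h(P))`. -/
theorem partial_pow_action_bounds {R : Type*} [CommRing R] [IsDomain R]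
    (H : HeightFn R) {n : ℕ}
    (σ : Polynomial R →+* Polynomial R) (δ : Polynomial R →+ Polynomial R)
    (leibniz : ∀ p q : Polynomial R, δ (p * q) = σ p * δ q + δ p * q)
    (hσdeg : ∀ p : Polynomial R, (σ p).degree ≤ p.degree)
    (hδdeg : ∀ p : Polynomial R, (δ p).degree ≤ p.degree)
    (c : ℝ → ℝ → ℝ)
    (hc0 : ∀ a b : ℝ, 0 ≤ c a b)
    (hcmono : ∀ a₁ a₂ b₁ b₂ : ℝ, a₁ ≤ a₂ → b₁ ≤ b₂ → c a₁ b₁ ≤ c a₂ b₂)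
    (hctri : ∀ a b₁ b₂ : ℝ, c a (b₁ + b₂) ≤ c a b₁ + c a b₂)
    (hc : ∀ (d B : ℝ) (p q : Polynomial R), (p.natDegree : ℝ) ≤ d →
      (q.natDegree : ℝ) ≤ d → H.hp p ≤ B → H.hp q ≤ B →
      H.hp (σ p + δ q) ≤ c d B ∧ H.hp (-σ p + δ q) ≤ c d B)
    (α β γ : ℤ)
    (hα : α = 0 ∨ α = 1 ∨ α = -1) (hβ : β = 0 ∨ β = 1 ∨ β = -1)
    (hγ : γ = 0 ∨ γ = 1 ∨ γ = -1)
    (Dact : MvR R n →+ MvR R n)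
    (hXrule : ∀ (i : Fin n) (j : ℕ), Dact (X (i, j)) = X (i, j + 1))
    (hCrule : ∀ (p : Polynomial R) (P : MvR R n),
      Dact (MvPolynomial.C p * P) = MvPolynomial.C (σ p) * Dact P + MvPolynomial.C (δ p) * P)
    (hmul : ∀ P Q : MvR R n,
      Dact (P * Q) = α • (Dact P * Dact Q) + β • (Dact P * Q + P * Dact Q) + γ • (P * Q))
    (P : MvR R n) (Dv : Fin n → ℕ) (hDv : Dv ≠ 0)
    (hPdeg : ∀ m ∈ P.support, ∀ i, gdeg i m ≤ Dv i)
    (Sv : Fin n → ℕ) (hPS : ∀ m ∈ P.support, ∀ v ∈ m.support, v.2 ≤ Sv v.1)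
    (k : ℕ) :
    (∀ m ∈ ((⇑Dact)^[k] P).support, ∀ v ∈ m.support, v.2 ≤ Sv v.1 + k) ∧
    (∀ m ∈ ((⇑Dact)^[k] P).support, ∀ i, gdeg i m ≤ Dv i) ∧
    degx ((⇑Dact)^[k] P) ≤ degx P ∧
    mvHeight H ((⇑Dact)^[k] P) ≤
      (k : ℝ) * H.hN 4 * (∑ i, (Dv i : ℝ)) +
        citer c k (degx P : ℝ) (mvHeight H P) := by
    classical
  obtain ⟨i₀, hi₀⟩ := Function.ne_iff.mp hDv
  have hs : 1 ≤ ∑ i, Dv i := by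
    have h1 : 1 ≤ Dv i₀ := Nat.one_le_iff_ne_zero.mpr (by simpa using hi₀)
    exact h1.trans (Finset.single_le_sum (fun i _ => Nat.zero_le _) (Finset.mem_univ i₀))
  have hα1 : α.natAbs ≤ 1 := by rcases hα with h|h|h <;> simp [h]
  have hβ1 : β.natAbs ≤ 1 := by rcases hβ with h|h|h <;> simp [h]
  have hγ1 : γ.natAbs ≤ 1 := by rcases hγ with h|h|h <;> simp [h]
  obtain ⟨ε, hε1, hDact1⟩ := Dact_one i₀ hα hβ hγ Dact hXrule hmul
  set d := degx P with hd
  set h₀ := mvHeight H P with hh₀def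
  have hh₀ : 0 ≤ h₀ := mvHeight_nonneg H P
  have base2 : ∀ m', ∃ L : List (Polynomial R), MvPolynomial.coeff m' P = L.sum ∧
      L.length ≤ 5 ^ (0 * ∑ i, Dv i) ∧
      ∀ f ∈ L, f.natDegree ≤ d ∧ H.hp f ≤ citer c 0 (d : ℝ) h₀ := by
    intro m'
    by_cases hz : MvPolynomial.coeff m' P = 0
    · exact ⟨[], by simp [hz], by simp, by simp⟩
    · refine ⟨[MvPolynomial.coeff m' P], by simp, by simp, ?_⟩
      intro f hf
      rw [List.mem_singleton] at hf
      subst hf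
      constructor
      · exact Finset.le_sup (f := fun m => (MvPolynomial.coeff m P).natDegree)
          (MvPolynomial.mem_support_iff.mpr hz)
      · exact hp_coeff_le_mvHeight H P m'
  have main : ∀ k : ℕ,
      (∀ m ∈ ((⇑Dact)^[k] P).support, (∀ v ∈ m.support, v.2 ≤ Sv v.1 + k) ∧
        ∀ i, gdeg i m ≤ Dv i) ∧
      (∀ m', ∃ L : List (Polynomial R), MvPolynomial.coeff m' ((⇑Dact)^[k] P) = L.sum ∧
        L.length ≤ 5 ^ (k * ∑ i, Dv i) ∧
        ∀ f ∈ L, f.natDegree ≤ d ∧ H.hp f ≤ citer c k (d : ℝ) h₀) := by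
    intro k
    induction k with
    | zero =>
      refine ⟨?_, ?_⟩
      · intro m hm
        rw [Function.iterate_zero_apply] at hm
        exact ⟨fun v hv => by have := hPS m hm v hv; omega, hPdeg m hm⟩
      · intro m'
        rw [Function.iterate_zero_apply]
        exact base2 m'
    | succ k ih =>
      rw [Function.iterate_succ_apply']
      exact step_lemma H σ δ hσdeg hδdeg c hc0 hc hα1 hβ1 hγ1 Dact hXrule hCrule hmul
        ε hε1 hDact1 Dv Sv hs d h₀ hh₀ k _ ih.1 ih.2
  obtain ⟨m1, m2⟩ := main k
  refine ⟨fun m hm => (m1 m hm).1, fun m hm => (m1 m hm).2, ?_, ?_⟩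
  · unfold degx
    refine Finset.sup_le ?_
    intro m hm
    obtain ⟨L, hsum, hlen, hbd⟩ := m2 m
    rw [hsum]
    exact natDegree_list_sum_le' L fun f hf => (hbd f hf).1
  · have hB : ∀ m, H.hp (MvPolynomial.coeff m ((⇑Dact)^[k] P)) ≤
        ((k * ∑ i, Dv i : ℕ) : ℝ) * H.hN 4 + citer c k (d : ℝ) h₀ := by
      intro m
      obtain ⟨L, hsum, hlen, hbd⟩ := m2 m
      rw [hsum]
      exact H.hp_pow5 (k * ∑ i, Dv i) L hlen (citer_nonneg c hc0 hh₀ k)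
        (fun f hf => (hbd f hf).2)
    have hBn : (0:ℝ) ≤ ((k * ∑ i, Dv i : ℕ) : ℝ) * H.hN 4 + citer c k (d : ℝ) h₀ :=
      add_nonneg (mul_nonneg (Nat.cast_nonneg _) (H.hN_nonneg 4)) (citer_nonneg c hc0 hh₀ k)
    refine (mvHeight_le H _ hBn (fun m _ => hB m)).trans ?_
    have e1 : ((k * ∑ i, Dv i : ℕ) : ℝ) * H.hN 4 = (k:ℝ) * H.hN 4 * (∑ i, (Dv i : ℝ)) := by
      push_cast
      ring
    rw [e1]
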